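/- Let T = ℝ^d/ℤ^d be the real d-dimensional torus. Then the collection of subsets of T that are finite unions of closed subgroups of T satisfies the descending chain condition with respect to inclusion: there is no infinite strictly decreasing sequence X_1 ⊋ X_2 ⊋ X_3 ⊋ ⋯ of such subsets. -/

import Mathlib

set_option linter.unusedSectionVars false
set_option maxHeartbeats 1000000

open Pointwise

namespace ToricMLD

section PartD
open Multiset
variable {β : Type*} [PartialOrder β]

/-- One step of the Dershowitz–Manna relation: replace one element by finitely
many smaller ones. -/
def OneStep (M N : Multiset β) : Prop :=
  ∃ (M₀ : Multiset β) (a : β) (K : Multiset β),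
    N = a ::ₘ M₀ ∧ M = M₀ + K ∧ ∀ b ∈ K, b < a

lemma no_descending {α : Type*} {r : α → α → Prop} (h : WellFounded r)
    (f : ℕ → α) (hf : ∀ n, r (f (n + 1)) (f n)) : False := by
  have key : ∀ a, Acc r a → ∀ n, f n = a → False := by
    intro a ha
    induction ha with
    | intro a _ ih =>
      intro n hn
      exact ih (f (n+1)) (hn ▸ hf n) (n+1) rfl
  exact key (f 0) (h.apply _) 0 rfl

lemma acc_add_of_forall_lt {a : β} {K : Multiset β}
    (ha : ∀ b < a, ∀ M, Acc (OneStep (β := β)) M → Acc OneStep (b ::ₘ M))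
    (hK : ∀ b ∈ K, b < a) {M : Multiset β} (hM : Acc (OneStep (β := β)) M) :
    Acc (OneStep (β := β)) (M + K) := by
  induction K using Multiset.induction with
  | empty => simpa using hM
  | cons b K ih =>
    have h1 : Acc (OneStep (β := β)) (M + K) :=
      ih (fun c hc => hK c (mem_cons_of_mem hc))
    have := ha b (hK b (mem_cons_self b K)) _ h1
    simpa [Multiset.add_cons] using this

lemma acc_cons {a : β}
    (ha : ∀ b < a, ∀ M, Acc (OneStep (β := β)) M → Acc OneStep (b ::ₘ M))
    {M : Multiset β} (hM : Acc (OneStep (β := β)) M) :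
    Acc (OneStep (β := β)) (a ::ₘ M) := by
  induction hM with
  | intro M hMacc ihM =>
    constructor
    intro P hP
    obtain ⟨M₀, c, K, hN, hPeq, hK⟩ := hP
    rcases Multiset.cons_eq_cons.mp hN with ⟨hac, hM₀⟩ | ⟨hne, Q, hMQ, hM₀⟩
    · subst hac
      subst hPeq
      rw [← hM₀]
      exact acc_add_of_forall_lt ha hK (Acc.intro M hMacc)
    · have hstep : OneStep (Q + K) M := ⟨Q, c, K, hMQ, rfl, hK⟩
      have := ihM _ hstep
      rw [hPeq, hM₀]
      simpa [Multiset.cons_add] using this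

lemma acc_cons_all (wfβ : WellFounded ((· < ·) : β → β → Prop)) :
    ∀ a : β, ∀ M, Acc (OneStep (β := β)) M → Acc (OneStep (β := β)) (a ::ₘ M) := by
  intro a
  induction a using wfβ.induction with
  | _ a ih =>
    intro M hM
    exact acc_cons (fun b hb => ih b hb) hM

lemma oneStep_wf (wfβ : WellFounded ((· < ·) : β → β → Prop)) :
    WellFounded (OneStep (β := β)) := by
  constructor
  intro M
  induction M using Multiset.induction with
  | empty =>
    constructor
    intro y hy
    obtain ⟨M₀, a, K, hN, _, _⟩ := hy
    exact absurd hN.symm (Multiset.cons_ne_zero)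
  | cons a M ih => exact acc_cons_all wfβ a M ih

open Relation in
lemma transGen_oneStep
    : ∀ (X : Multiset β), X ≠ 0 → ∀ (C Y : Multiset β),
      (∀ y ∈ Y, ∃ x ∈ X, y < x) → TransGen (OneStep (β := β)) (C + Y) (C + X) := by
  classical
  intro X
  induction X using Multiset.induction with
  | empty => intro h; exact absurd rfl h
  | cons a X ih =>
    intro _ C Y hY
    by_cases hX : X = 0
    · subst hX
      refine TransGen.single ⟨C, a, Y, by rw [Multiset.add_cons, add_zero], rfl, ?_⟩
      intro y hy
      obtain ⟨x, hx, hlt⟩ := hY y hy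
      simp only [Multiset.mem_cons, Multiset.notMem_zero, or_false] at hx
      rwa [hx] at hlt
    · set Y₁ := Y.filter (· < a) with hY₁
      set Y₂ := Y.filter (fun y => ¬ y < a) with hY₂
      have hpart : Y₁ + Y₂ = Y := Multiset.filter_add_not _ _
      have hchain : TransGen (OneStep (β := β)) ((C + Y₁) + Y₂) ((C + Y₁) + X) := by
        refine ih hX (C + Y₁) Y₂ ?_
        intro y hy
        have hy' : y ∈ Y ∧ ¬ y < a := by
          simpa [hY₂] using (Multiset.mem_filter.mp hy)
        obtain ⟨x, hx, hlt⟩ := hY y hy'.1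
        rcases Multiset.mem_cons.mp hx with rfl | hx'
        · exact absurd hlt hy'.2
        · exact ⟨x, hx', hlt⟩
      have hstep : OneStep ((C + Y₁) + X) (C + (a ::ₘ X)) := by
        refine ⟨C + X, a, Y₁, by simp [Multiset.add_cons], by rw [add_assoc, add_comm Y₁ X, ← add_assoc], ?_⟩
        intro b hb
        exact (Multiset.mem_filter.mp hb).2
      have : TransGen (OneStep (β := β)) ((C + Y₁) + Y₂) (C + (a ::ₘ X)) :=
        hchain.tail hstep
      have heq : (C + Y₁) + Y₂ = C + Y := by rw [add_assoc, hpart]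
      rwa [heq] at this

end PartD

noncomputable section



abbrev AC := AddCircle (1:ℝ)

/-- A closed subgroup of `AddCircle 1` is the whole group or finite. -/
lemma addCircle_closed_subgroup (H : AddSubgroup AC) (hH : IsClosed (H : Set AC)) :
    H = ⊤ ∨ (H : Set AC).Finite := by
  set mk : ℝ →+ AC := QuotientAddGroup.mk' (AddSubgroup.zmultiples (1:ℝ)) with hmk
  have hmkcont : Continuous mk := continuous_quotient_mk'
  have hmksurj : Function.Surjective mk := QuotientAddGroup.mk'_surjective _
  set S : AddSubgroup ℝ := H.comap mk with hS
  have hScl : IsClosed (S : Set ℝ) := hH.preimage hmkcont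
  have h1S : (1:ℝ) ∈ S := by
    have : mk 1 = 0 := by
      rw [hmk, QuotientAddGroup.mk'_apply, QuotientAddGroup.eq_zero_iff]
      exact AddSubgroup.mem_zmultiples 1
    simpa [hS, AddSubgroup.mem_comap, this] using H.zero_mem
  rcases S.dense_or_cyclic with hdense | ⟨a, ha⟩
  · left
    have : (S : Set ℝ) = Set.univ := by
      rw [← hScl.closure_eq]; exact hdense.closure_eq
    rw [eq_top_iff]
    intro x _
    obtain ⟨r, rfl⟩ := hmksurj x
    have : r ∈ S := by rw [← SetLike.mem_coe, this]; trivial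
    exact this
  · right
    rw [ha] at h1S
    rw [AddSubgroup.mem_closure_singleton] at h1S
    obtain ⟨n, hn⟩ := h1S
    have hnne : n ≠ 0 := by rintro rfl; rw [zero_smul] at hn; exact one_ne_zero hn.symm
    set m : ℤ := |n| with hm
    have hmpos : 0 < m := abs_pos.mpr hnne
    have hma : mk (m • a) = 0 := by
      rcases abs_choice n with h | h
      · rw [hm, h, hn]
        rw [hmk, QuotientAddGroup.mk'_apply, QuotientAddGroup.eq_zero_iff]
        exact AddSubgroup.mem_zmultiples 1
      · rw [hm, h, neg_smul, hn]
        rw [hmk, QuotientAddGroup.mk'_apply, QuotientAddGroup.eq_zero_iff]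
        exact neg_mem (AddSubgroup.mem_zmultiples 1)
    have hsub : (H : Set AC) ⊆ mk '' ((fun k : ℤ => k • a) '' (Set.Ico (0:ℤ) m)) := by
      intro x hx
      obtain ⟨r, rfl⟩ := hmksurj x
      have hrS : r ∈ S := hx
      rw [ha, AddSubgroup.mem_closure_singleton] at hrS
      obtain ⟨k, hk⟩ := hrS
      refine ⟨(k % m) • a, ⟨k % m, ⟨Int.emod_nonneg k hmpos.ne', Int.emod_lt_of_pos k hmpos⟩, rfl⟩, ?_⟩
      have hsplit : k • a = (k % m) • a + (k / m) • (m • a) := by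
        rw [smul_smul, ← add_smul, Int.emod_add_ediv_mul]
      have hmkeq : mk (k • a) = mk ((k % m) • a) := by
        simp only [hsplit, map_add, map_zsmul, hma, smul_zero, add_zero]
      rw [← hk]
      exact hmkeq.symm
    exact Set.Finite.subset (((Set.finite_Ico 0 m).image _).image _) hsub

variable {G : Type*} [AddCommGroup G] [TopologicalSpace G] [IsTopologicalAddGroup G]
  [T2Space G] [CompactSpace G]

/-- The type of closed subgroups. -/
abbrev ClosedSG (G : Type*) [AddCommGroup G] [TopologicalSpace G] :=
  {H : AddSubgroup G // IsClosed (H : Set G)}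

lemma closedSG_wf_of_addCircle :
    WellFounded ((· < ·) : ClosedSG AC → ClosedSG AC → Prop) := by
  -- first: accessibility of all closed subgroups with finite carrier
  have hfin : ∀ (n : ℕ) (H : ClosedSG AC), (H.1 : Set AC).Finite →
      ((H.1 : Set AC)).ncard ≤ n → Acc (· < ·) H := by
    intro n
    induction n with
    | zero =>
      intro H hf hc
      exfalso
      have : (0:AC) ∈ (H.1 : Set AC) := H.1.zero_mem
      have : 0 < (H.1 : Set AC).ncard := (Set.ncard_pos hf).mpr ⟨0, this⟩
      omega
    | succ n ih =>
      intro H hf hc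
      constructor
      intro K hK
      have hKsub : (K.1 : Set AC) ⊂ (H.1 : Set AC) := by
        rw [SetLike.coe_ssubset_coe]; exact hK
      have hKfin : (K.1 : Set AC).Finite := hf.subset hKsub.subset
      have : (K.1 : Set AC).ncard < (H.1 : Set AC).ncard := Set.ncard_lt_ncard hKsub hf
      exact ih K hKfin (by omega)
  constructor
  intro H
  constructor
  intro K hK
  have hKne : K.1 ≠ ⊤ := by
    intro h
    have : H.1 = ⊤ := top_le_iff.mp (h ▸ hK.le)
    exact hK.ne (Subtype.ext (h.trans this.symm))
  rcases addCircle_closed_subgroup K.1 K.2 with h | h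
  · exact absurd h hKne
  · exact hfin _ K h le_rfl


abbrev Gd (d : ℕ) := Fin d → AC

def πd (d : ℕ) : Gd (d+1) →+ AC := Pi.evalAddMonoidHom (fun _ => AC) (Fin.last d)

def ρd (d : ℕ) : Gd (d+1) →+ Gd d :=
  AddMonoidHom.mk' (fun x j => x j.castSucc) (fun _ _ => rfl)

def υd (d : ℕ) : Gd d →+ Gd (d+1) :=
  AddMonoidHom.mk' (fun x => Fin.snoc x 0) (by
    intro a b
    funext i
    induction i using Fin.lastCases with
    | last => simp
    | cast j => simp)

@[simp] lemma υd_apply (d : ℕ) (x : Gd d) : υd d x = Fin.snoc x 0 := rfl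
@[simp] lemma ρd_apply (d : ℕ) (x : Gd (d+1)) (j : Fin d) : ρd d x j = x j.castSucc := rfl
@[simp] lemma πd_apply (d : ℕ) (x : Gd (d+1)) : πd d x = x (Fin.last d) := rfl

lemma continuous_πd (d : ℕ) : Continuous (πd d) := continuous_apply _
lemma continuous_ρd (d : ℕ) : Continuous (ρd d) := continuous_pi fun _ => continuous_apply _
lemma continuous_υd (d : ℕ) : Continuous (υd d) := by
  refine continuous_pi fun i => ?_
  induction i using Fin.lastCases with
  | last => exact (continuous_const (y := (0:AC))).congr fun x => by simp
  | cast j => exact (continuous_apply j).congr fun x => by simp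

lemma ρυ (d : ℕ) (x : Gd d) : ρd d (υd d x) = x := funext fun j => by simp
lemma πυ (d : ℕ) (x : Gd d) : πd d (υd d x) = 0 := by simp
lemma υρ_ker (d : ℕ) (x : Gd (d+1)) (hx : πd d x = 0) : υd d (ρd d x) = x := by
  funext i
  induction i using Fin.lastCases with
  | last => simpa using hx.symm
  | cast j => simp

lemma map_isClosed {G₁ G₂ : Type*} [AddCommGroup G₁] [TopologicalSpace G₁] [CompactSpace G₁]
    [AddCommGroup G₂] [TopologicalSpace G₂] [T2Space G₂]
    (f : G₁ →+ G₂) (hf : Continuous f) (H : AddSubgroup G₁) (hH : IsClosed (H : Set G₁)) :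
    IsClosed ((H.map f : AddSubgroup G₂) : Set G₂) := by
  rw [AddSubgroup.coe_map]
  exact (hH.isCompact.image hf).isClosed

lemma ker_isClosed (d : ℕ) : IsClosed (((πd d).ker : AddSubgroup (Gd (d+1))) : Set (Gd (d+1))) := by
  have : (((πd d).ker : AddSubgroup (Gd (d+1))) : Set (Gd (d+1))) = (πd d) ⁻¹' {0} := by
    ext x; simp [AddMonoidHom.mem_ker]
  rw [this]
  exact isClosed_singleton.preimage (continuous_πd d)

lemma recover {d : ℕ} {K H : AddSubgroup (Gd (d+1))} (hKH : K ≤ H)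
    (h1 : (K ⊓ (πd d).ker).map (ρd d) = (H ⊓ (πd d).ker).map (ρd d))
    (h2 : K.map (πd d) = H.map (πd d)) : K = H := by
  refine le_antisymm hKH fun h hh => ?_
  have hπh : πd d h ∈ K.map (πd d) := by
    rw [h2]; exact AddSubgroup.mem_map.mpr ⟨h, hh, rfl⟩
  obtain ⟨k, hk, hπk⟩ := AddSubgroup.mem_map.mp hπh
  have hd : h - k ∈ H ⊓ (πd d).ker := by
    rw [AddSubgroup.mem_inf]
    refine ⟨sub_mem hh (hKH hk), ?_⟩
    rw [AddMonoidHom.mem_ker, map_sub, hπk, sub_self]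
  have hmem : ρd d (h - k) ∈ (K ⊓ (πd d).ker).map (ρd d) := by
    rw [h1]; exact AddSubgroup.mem_map.mpr ⟨h - k, hd, rfl⟩
  obtain ⟨k', hk', hρ⟩ := AddSubgroup.mem_map.mp hmem
  have hkk : k' = h - k := by
    funext i
    induction i using Fin.lastCases with
    | last =>
      have e1 : πd d k' = 0 := AddMonoidHom.mem_ker.mp (AddSubgroup.mem_inf.mp hk').2
      have e2 : πd d (h - k) = 0 := AddMonoidHom.mem_ker.mp (AddSubgroup.mem_inf.mp hd).2
      exact e1.trans e2.symm
    | cast j => exact congrFun hρ j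
  have : h = k + k' := by rw [hkk, add_sub_cancel]
  rw [this]
  exact add_mem hk (AddSubgroup.mem_inf.mp hk').1

theorem closedSG_wf : ∀ d : ℕ, WellFounded ((· < ·) : ClosedSG (Gd d) → ClosedSG (Gd d) → Prop) := by
  intro d
  induction d with
  | zero =>
    haveI : Subsingleton (Gd 0) := ⟨fun a b => funext fun i => i.elim0⟩
    constructor
    intro H
    constructor
    intro K hK
    have hEq : K = H := by
      refine Subtype.ext (SetLike.ext fun x => ?_)
      have : x = 0 := Subsingleton.elim x 0
      subst this
      exact iff_of_true (zero_mem _) (zero_mem _)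
    exact absurd (hEq ▸ hK) (lt_irrefl H)
  | succ d ihd =>
    set F : ClosedSG (Gd (d+1)) → ClosedSG (Gd d) × ClosedSG AC := fun H =>
      (⟨(H.1 ⊓ (πd d).ker).map (ρd d),
          map_isClosed _ (continuous_ρd d) _ (by rw [AddSubgroup.coe_inf]; exact H.2.inter (ker_isClosed d))⟩,
       ⟨H.1.map (πd d), map_isClosed _ (continuous_πd d) _ H.2⟩) with hF
    have hwf : WellFounded (Prod.Lex ((· < ·) : ClosedSG (Gd d) → _ → Prop)
        ((· < ·) : ClosedSG AC → _ → Prop)) := ihd.prod_lex closedSG_wf_of_addCircle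
    refine Subrelation.wf (r := InvImage _ F) (fun {K H} hKH => ?_) (InvImage.wf F hwf)
    have m1 : (F K).1 ≤ (F H).1 := AddSubgroup.map_mono (inf_le_inf_right _ hKH.le)
    have m2 : (F K).2 ≤ (F H).2 := AddSubgroup.map_mono hKH.le
    show Prod.Lex _ _ (F K) (F H)
    rw [Prod.lex_iff]
    rcases lt_or_eq_of_le m1 with h1 | h1
    · exact Or.inl h1
    · rcases lt_or_eq_of_le m2 with h2 | h2
      · exact Or.inr ⟨h1, h2⟩
      · exfalso
        have : K.1 = H.1 :=
          recover hKH.le (Subtype.ext_iff.mp h1) (Subtype.ext_iff.mp h2)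
        exact hKH.ne (Subtype.ext this)



-- Part B proper
/-- Divisibility for subgroups. -/
def DivSG {G : Type*} [AddCommGroup G] (S : AddSubgroup G) : Prop :=
  ∀ x ∈ S, ∀ n : ℕ, 0 < n → ∃ y ∈ S, n • y = x

section DivGeneric
variable {G : Type*} [AddCommGroup G]

def smulHom (n : ℤ) : G →+ G := AddMonoidHom.mk' (fun x => n • x) (fun a b => smul_add n a b)

@[simp] lemma smulHom_apply (n : ℤ) (x : G) : smulHom n x = n • x := rfl

/-- The "divisible part" of a subgroup. -/
def divPart (H : AddSubgroup G) : AddSubgroup G :=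
  ⨅ k : ℕ, H.map (smulHom (k.factorial : ℤ))

lemma mem_divPart {H : AddSubgroup G} {x : G} :
    x ∈ divPart H ↔ ∀ k : ℕ, x ∈ H.map (smulHom (k.factorial : ℤ)) := by
  simp [divPart, AddSubgroup.mem_iInf]

lemma map_smulHom_mono {H : AddSubgroup G} {m m' : ℕ} (h : m ∣ m') :
    H.map (smulHom (m' : ℤ)) ≤ H.map (smulHom (m : ℤ)) := by
  obtain ⟨c, rfl⟩ := h
  rintro x ⟨y, hy, rfl⟩
  refine ⟨(c : ℤ) • y, AddSubgroup.zsmul_mem _ hy _, ?_⟩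
  simp [smul_smul]
  rw [← Nat.cast_mul, natCast_zsmul]

lemma divPart_le (H : AddSubgroup G) : divPart H ≤ H := by
  refine le_trans (iInf_le _ 0) ?_
  intro x hx
  obtain ⟨y, hy, rfl⟩ := hx
  simpa using hy

end DivGeneric

section DivTop
variable {G : Type*} [AddCommGroup G] [TopologicalSpace G] [IsTopologicalAddGroup G]
  [T2Space G] [CompactSpace G]

lemma continuous_smulHom (n : ℤ) : Continuous (smulHom (G := G) n) := continuous_zsmul n

lemma divPart_isClosed (H : AddSubgroup G) (hH : IsClosed (H : Set G)) :
    IsClosed ((divPart H : AddSubgroup G) : Set G) := by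
  rw [divPart, AddSubgroup.coe_iInf]
  exact isClosed_iInter fun k => map_isClosed _ (continuous_smulHom _) _ hH

lemma exists_divPart_preimage {G' : Type*} [AddCommGroup G'] [TopologicalSpace G']
    [IsTopologicalAddGroup G'] [T2Space G'] (φ : G →+ G') (hφ : Continuous φ)
    (H : AddSubgroup G) (hH : IsClosed (H : Set G)) (t : G')
    (ht : ∀ k : ℕ, ∃ y ∈ H.map (smulHom (k.factorial : ℤ)), φ y = t) :
    ∃ y ∈ divPart H, φ y = t := by
  set F : ℕ → Set G := fun k => ((H.map (smulHom (k.factorial : ℤ))) : Set G) ∩ φ ⁻¹' {t}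
    with hF
  have hdec : ∀ k, F (k + 1) ⊆ F k := by
    intro k
    exact Set.inter_subset_inter_left _
      (map_smulHom_mono (Nat.factorial_dvd_factorial (Nat.le_succ k)))
  have hne : ∀ k, (F k).Nonempty := by
    intro k
    obtain ⟨y, hy, hyt⟩ := ht k
    exact ⟨y, hy, hyt⟩
  have hcl : ∀ k, IsClosed (F k) := fun k =>
    (map_isClosed _ (continuous_smulHom _) _ hH).inter (isClosed_singleton.preimage hφ)
  have hcompact : IsCompact (F 0) := (hcl 0).isCompact
  obtain ⟨y, hy⟩ := IsCompact.nonempty_iInter_of_sequence_nonempty_isCompact_isClosed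
    F hdec hne hcompact hcl
  have h1 : y ∈ divPart H := mem_divPart.mpr fun k => (Set.mem_iInter.mp hy k).1
  have h2 : φ y = t := (Set.mem_iInter.mp hy 0).2
  exact ⟨y, h1, h2⟩

lemma divPart_div (H : AddSubgroup G) (hH : IsClosed (H : Set G)) : DivSG (divPart H) := by
  intro x hx n hn
  have key : ∃ y ∈ divPart H, smulHom (n : ℤ) y = x := by
    refine exists_divPart_preimage _ (continuous_smulHom _) H hH x fun k => ?_
    have hx' : x ∈ H.map (smulHom (((n * k.factorial).factorial : ℕ) : ℤ)) :=
      mem_divPart.mp hx _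
    have hle : H.map (smulHom (((n * k.factorial).factorial : ℕ) : ℤ)) ≤
        H.map (smulHom ((n * k.factorial : ℕ) : ℤ)) :=
      map_smulHom_mono (Nat.dvd_factorial (by positivity) le_rfl)
    obtain ⟨h, hh, rfl⟩ := hle hx'
    refine ⟨(k.factorial : ℤ) • h, ⟨h, hh, rfl⟩, ?_⟩
    simp [smul_smul]
    rw [← Nat.cast_mul, natCast_zsmul]
  obtain ⟨y, hy, hyx⟩ := key
  refine ⟨y, hy, ?_⟩
  rw [← natCast_zsmul]
  exact hyx

lemma coe_sup_eq (S T : AddSubgroup G) : ((S ⊔ T : AddSubgroup G) : Set G) =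
    (fun p : G × G => p.1 + p.2) '' ((S : Set G) ×ˢ (T : Set G)) := by
  ext x
  simp only [SetLike.mem_coe, AddSubgroup.mem_sup, Set.mem_image, Set.mem_prod, Prod.exists]
  constructor
  · rintro ⟨y, hy, z, hz, rfl⟩; exact ⟨y, z, ⟨hy, hz⟩, rfl⟩
  · rintro ⟨y, z, ⟨hy, hz⟩, rfl⟩; exact ⟨y, hy, z, hz, rfl⟩

lemma sup_isClosed (S T : AddSubgroup G) (hS : IsClosed (S : Set G))
    (hT : IsClosed (T : Set G)) : IsClosed ((S ⊔ T : AddSubgroup G) : Set G) := by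
  rw [coe_sup_eq]
  exact ((hS.isCompact.prod hT.isCompact).image continuous_add).isClosed

end DivTop

lemma DivSG.sup {G : Type*} [AddCommGroup G] {S T : AddSubgroup G}
    (hS : DivSG S) (hT : DivSG T) : DivSG (S ⊔ T) := by
  intro x hx n hn
  obtain ⟨y, hy, z, hz, rfl⟩ := AddSubgroup.mem_sup.mp hx
  obtain ⟨y', hy', rfl⟩ := hS y hy n hn
  obtain ⟨z', hz', rfl⟩ := hT z hz n hn
  exact ⟨y' + z', AddSubgroup.mem_sup.mpr ⟨y', hy', z', hz', rfl⟩, by rw [smul_add]⟩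

lemma DivSG.map {G G' : Type*} [AddCommGroup G] [AddCommGroup G'] {S : AddSubgroup G}
    (hS : DivSG S) (f : G →+ G') : DivSG (S.map f) := by
  rintro x ⟨y, hy, rfl⟩ n hn
  obtain ⟨z, hz, rfl⟩ := hS y hy n hn
  exact ⟨f z, ⟨z, hz, rfl⟩, by rw [← map_nsmul]⟩

lemma DivSG.bot {G : Type*} [AddCommGroup G] : DivSG (⊥ : AddSubgroup G) := by
  intro x hx n hn
  rw [AddSubgroup.mem_bot] at hx
  exact ⟨0, AddSubgroup.mem_bot.mpr rfl, by rw [smul_zero, hx]⟩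

lemma AC_div (m : ℤ) (hm : m ≠ 0) (t : AC) : ∃ u : AC, m • u = t := by
  induction t using QuotientAddGroup.induction_on with
  | H r =>
    refine ⟨((r / (m:ℝ) : ℝ) : AC), ?_⟩
    have : ((m • (r / (m:ℝ)) : ℝ) : AC) = ((r : ℝ) : AC) := by
      congr 1
      rw [zsmul_eq_mul]
      field_simp
    rw [← this]
    exact rfl

lemma πd_surj_of_top {d : ℕ} (H : AddSubgroup (Gd (d+1))) (hH : IsClosed (H : Set (Gd (d+1))))
    (htop : H.map (πd d) = ⊤) (t : AC) : ∃ s ∈ divPart H, πd d s = t := by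
  refine exists_divPart_preimage _ (continuous_πd d) H hH t fun k => ?_
  obtain ⟨u, hu⟩ := AC_div (k.factorial : ℤ) (by positivity) t
  have : u ∈ H.map (πd d) := by rw [htop]; trivial
  obtain ⟨h, hh, rfl⟩ := this
  refine ⟨(k.factorial : ℤ) • h, ⟨h, hh, rfl⟩, ?_⟩
  rw [map_zsmul]
  exact hu

theorem decompose : ∀ (d : ℕ) (H : AddSubgroup (Gd d)), IsClosed (H : Set (Gd d)) →
    ∃ t : Finset (Gd d × AddSubgroup (Gd d)),
      (∀ p ∈ t, IsClosed ((p.2 : AddSubgroup (Gd d)) : Set (Gd d)) ∧ DivSG p.2 ∧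
        p.1 ∈ H ∧ p.2 ≤ H) ∧
      (H : Set (Gd d)) = ⋃ p ∈ t, (p.1 +ᵥ ((p.2 : AddSubgroup (Gd d)) : Set (Gd d))) := by
  intro d
  induction d with
  | zero =>
    intro H _
    haveI : Subsingleton (Gd 0) := ⟨fun a b => funext fun i => i.elim0⟩
    refine ⟨{((0 : Gd 0), (⊥ : AddSubgroup (Gd 0)))}, ?_, ?_⟩
    · intro p hp
      rw [Finset.mem_singleton] at hp
      subst hp
      exact ⟨by rw [AddSubgroup.coe_bot]; exact isClosed_singleton, DivSG.bot,
        H.zero_mem, bot_le⟩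
    · ext x
      have hx0 : x = 0 := Subsingleton.elim _ _
      subst hx0
      simp only [SetLike.mem_coe, Set.mem_iUnion, Finset.mem_singleton]
      constructor
      · intro _
        exact ⟨((0 : Gd 0), (⊥ : AddSubgroup (Gd 0))), rfl, by
          rw [Set.mem_vadd_set_iff_neg_vadd_mem]
          simp⟩
      · intro _; exact H.zero_mem
  | succ d ih =>
    intro H hH
    classical
    set N : AddSubgroup (Gd (d+1)) := H ⊓ (πd d).ker with hN
    have hNcl : IsClosed (N : Set (Gd (d+1))) := by
      rw [hN, AddSubgroup.coe_inf]
      exact hH.inter (ker_isClosed d)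
    set N' : AddSubgroup (Gd d) := N.map (ρd d) with hN'
    have hN'cl : IsClosed (N' : Set (Gd d)) := map_isClosed _ (continuous_ρd d) _ hNcl
    obtain ⟨tN, htN, htNu⟩ := ih N' hN'cl
    have hNker : ∀ ν ∈ N, πd d ν = 0 := fun ν hν => (AddSubgroup.mem_inf.mp hν).2
    have hNH : N ≤ H := inf_le_left
    have hυN' : ∀ x ∈ N', υd d x ∈ N := by
      rintro x ⟨ν, hν, rfl⟩
      rwa [υρ_ker d ν (hNker ν hν)]
    have hmapυ : ∀ p ∈ tN, (p.2 : AddSubgroup (Gd d)).map (υd d) ≤ N := by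
      intro p hp
      rintro x ⟨w, hw, rfl⟩
      exact hυN' w ((htN p hp).2.2.2 hw)
    -- decompose ν ∈ N along the decomposition of N'
    have hνdec : ∀ ν ∈ N, ∃ p ∈ tN, ∃ w ∈ p.2, ν = υd d p.1 + υd d w := by
      intro ν hν
      have : ρd d ν ∈ (N' : Set (Gd d)) := ⟨ν, hν, rfl⟩
      rw [htNu] at this
      simp only [Set.mem_iUnion, exists_prop] at this
      obtain ⟨p, hp, hmem⟩ := this
      rw [Set.mem_vadd_set_iff_neg_vadd_mem] at hmem
      refine ⟨p, hp, -p.1 +ᵥ ρd d ν, hmem, ?_⟩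
      have : υd d (ρd d ν) = ν := υρ_ker d ν (hNker ν hν)
      rw [vadd_eq_add, map_add, map_neg, this, ← add_assoc, add_neg_cancel, zero_add]
    have hπcl : IsClosed ((H.map (πd d) : AddSubgroup AC) : Set AC) :=
      map_isClosed _ (continuous_πd d) _ hH
    rcases addCircle_closed_subgroup _ hπcl with htop | hfin
    · -- full projection case
      set S : AddSubgroup (Gd (d+1)) := divPart H with hS
      have hScl := divPart_isClosed H hH
      have hSdiv := divPart_div H hH
      have hSle : S ≤ H := divPart_le H
      refine ⟨tN.image (fun p => (υd d p.1, S ⊔ p.2.map (υd d))), ?_, ?_⟩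
      · intro q hq
        obtain ⟨p, hp, rfl⟩ := Finset.mem_image.mp hq
        obtain ⟨hcl, hdiv, hmem, hle⟩ := htN p hp
        refine ⟨sup_isClosed _ _ hScl (map_isClosed _ (continuous_υd d) _ hcl),
          DivSG.sup hSdiv (DivSG.map hdiv _), ?_, ?_⟩
        · exact hNH (hυN' p.1 hmem)
        · exact sup_le hSle (le_trans (hmapυ p hp) hNH)
      · ext h
        simp only [SetLike.mem_coe, Set.mem_iUnion, exists_prop, Finset.mem_image]
        constructor
        · intro hh
          obtain ⟨s, hs, hπs⟩ := πd_surj_of_top H hH htop (πd d h)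
          have hν : h - s ∈ N := by
            rw [AddSubgroup.mem_inf]
            exact ⟨sub_mem hh (hSle hs), by rw [AddMonoidHom.mem_ker, map_sub, hπs, sub_self]⟩
          obtain ⟨p, hp, w, hw, hweq⟩ := hνdec _ hν
          refine ⟨(υd d p.1, S ⊔ p.2.map (υd d)), ⟨p, hp, rfl⟩, ?_⟩
          rw [Set.mem_vadd_set_iff_neg_vadd_mem, vadd_eq_add]
          have hh2 : h = (υd d p.1 + υd d w) + s := sub_eq_iff_eq_add.mp hweq
          have : -υd d p.1 + h = s + υd d w := by rw [hh2]; abel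
          rw [this]
          exact AddSubgroup.mem_sup.mpr ⟨s, hs, υd d w, ⟨w, hw, rfl⟩, rfl⟩
        · rintro ⟨q, ⟨p, hp, rfl⟩, hmem⟩
          rw [Set.mem_vadd_set_iff_neg_vadd_mem, vadd_eq_add] at hmem
          have h1 : υd d p.1 ∈ H := hNH (hυN' p.1 (htN p hp).2.2.1)
          have h2 : -υd d p.1 + h ∈ H :=
            sup_le hSle (le_trans (hmapυ p hp) hNH) hmem
          have := add_mem h1 h2
          rwa [← add_assoc, add_neg_cancel, zero_add] at this
    · -- finite projection case
      set E : Finset AC := hfin.toFinset with hE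
      set g : AC → Gd (d+1) := fun y =>
        if h : y ∈ H.map (πd d) then (AddSubgroup.mem_map.mp h).choose else 0 with hg
      have hgspec : ∀ y ∈ H.map (πd d), g y ∈ H ∧ πd d (g y) = y := by
        intro y hy
        rw [hg]
        simp only [dif_pos hy]
        obtain ⟨h1, h2⟩ := (AddSubgroup.mem_map.mp hy).choose_spec
        exact ⟨h1, h2⟩
      refine ⟨(E ×ˢ tN).image (fun q => (g q.1 + υd d q.2.1, q.2.2.map (υd d))), ?_, ?_⟩
      · intro q hq
        obtain ⟨⟨y, p⟩, hyp, rfl⟩ := Finset.mem_image.mp hq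
        rw [Finset.mem_product] at hyp
        obtain ⟨hyE, hptN⟩ := hyp
        have hyH : y ∈ H.map (πd d) := by
          rw [hE, Set.Finite.mem_toFinset] at hyE
          exact hyE
        obtain ⟨hcl, hdiv, hmem, hle⟩ := htN p hptN
        refine ⟨map_isClosed _ (continuous_υd d) _ hcl, DivSG.map hdiv _, ?_, ?_⟩
        · exact add_mem (hgspec y hyH).1 (hNH (hυN' p.1 hmem))
        · exact le_trans (hmapυ p hptN) hNH
      · ext h
        simp only [SetLike.mem_coe, Set.mem_iUnion, exists_prop, Finset.mem_image]
        constructor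
        · intro hh
          set y : AC := πd d h with hy
          have hyH : y ∈ H.map (πd d) := ⟨h, hh, rfl⟩
          have hν : h - g y ∈ N := by
            rw [AddSubgroup.mem_inf]
            refine ⟨sub_mem hh (hgspec y hyH).1, ?_⟩
            rw [AddMonoidHom.mem_ker, map_sub, (hgspec y hyH).2, sub_self]
          obtain ⟨p, hp, w, hw, hweq⟩ := hνdec _ hν
          refine ⟨(g y + υd d p.1, p.2.map (υd d)), ⟨(y, p), by
            rw [Finset.mem_product]
            exact ⟨by rw [hE, Set.Finite.mem_toFinset]; exact hyH, hp⟩, rfl⟩, ?_⟩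
          rw [Set.mem_vadd_set_iff_neg_vadd_mem, vadd_eq_add]
          have hh2 : h = (υd d p.1 + υd d w) + g y := sub_eq_iff_eq_add.mp hweq
          have : -(g y + υd d p.1) + h = υd d w := by rw [hh2]; abel
          rw [this]
          exact ⟨w, hw, rfl⟩
        · rintro ⟨q, ⟨⟨y, p⟩, hyp, rfl⟩, hmem⟩
          rw [Finset.mem_product] at hyp
          obtain ⟨hyE, hptN⟩ := hyp
          have hyH : y ∈ H.map (πd d) := by
            rw [hE, Set.Finite.mem_toFinset] at hyE
            exact hyE
          rw [Set.mem_vadd_set_iff_neg_vadd_mem, vadd_eq_add] at hmem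
          have h1 : g y + υd d p.1 ∈ H :=
            add_mem (hgspec y hyH).1 (hNH (hυN' p.1 (htN p hptN).2.2.1))
          have h2 : -(g y + υd d p.1) + h ∈ H := le_trans (hmapυ p hptN) hNH hmem
          have := add_mem h1 h2
          rwa [← add_assoc, add_neg_cancel, zero_add] at this

-- Part C
variable {G : Type*} [AddCommGroup G] [TopologicalSpace G] [IsTopologicalAddGroup G]
  [T2Space G] [CompactSpace G]

lemma prime_coset (a : G) (S : AddSubgroup G) (hScl : IsClosed (S : Set G)) (hSdiv : DivSG S)
    {ι : Type*} [Finite ι] (b : ι → G) (T : ι → AddSubgroup G)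
    (hT : ∀ i, IsClosed ((T i : AddSubgroup G) : Set G))
    (hcov : (a +ᵥ (S : Set G)) ⊆ ⋃ i, (b i +ᵥ ((T i : AddSubgroup G) : Set G))) :
    ∃ i, (a +ᵥ (S : Set G)) ⊆ b i +ᵥ ((T i : AddSubgroup G) : Set G) := by
  classical
  have haS : a ∈ a +ᵥ (S : Set G) := by
    rw [Set.mem_vadd_set_iff_neg_vadd_mem, vadd_eq_add, neg_add_cancel]
    exact S.zero_mem
  cases isEmpty_or_nonempty ι with
  | inl h =>
    obtain ⟨i, _⟩ := Set.mem_iUnion.mp (hcov haS)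
    exact (IsEmpty.false i).elim
  | inr h =>
  haveI : CompactSpace ↥S := isCompact_iff_compactSpace.mp hScl.isCompact
  set F : ι → Set ↥S := fun i => (fun s : ↥S => -(b i) + (a + ↑s)) ⁻¹' (T i : Set G) with hF
  have hFcl : ∀ i, IsClosed (F i) :=
    fun i => (hT i).preimage (continuous_const.add (continuous_const.add continuous_subtype_val))
  have hFcov : (⋃ i, F i) = Set.univ := by
    rw [Set.eq_univ_iff_forall]
    intro s
    have : a + ↑s ∈ a +ᵥ (S : Set G) := by
      rw [Set.mem_vadd_set_iff_neg_vadd_mem, vadd_eq_add, ← add_assoc, neg_add_cancel, zero_add]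
      exact s.2
    obtain ⟨i, hi⟩ := Set.mem_iUnion.mp (hcov this)
    rw [Set.mem_vadd_set_iff_neg_vadd_mem, vadd_eq_add] at hi
    exact Set.mem_iUnion.mpr ⟨i, hi⟩
  obtain ⟨i, hi⟩ := nonempty_interior_of_iUnion_of_closed hFcl hFcov
  obtain ⟨x, hx⟩ := hi
  have hxF : x ∈ F i := interior_subset hx
  have hc : -(b i) + (a + ↑x) ∈ T i := hxF
  set U : AddSubgroup ↥S := (T i).comap S.subtype with hU
  have hFU : F i = (fun s : ↥S => x + s) '' (U : Set ↥S) := by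
    ext s
    simp only [Set.mem_image, SetLike.mem_coe, hU, AddSubgroup.mem_comap]
    constructor
    · intro hs
      refine ⟨s - x, ?_, by abel⟩
      have hsub : (-(b i) + (a + ↑s)) - (-(b i) + (a + ↑x)) ∈ T i := sub_mem hs hc
      have : (-(b i) + (a + ↑s)) - (-(b i) + (a + ↑x)) = ↑s - ↑x := by abel
      rw [this] at hsub
      show ((s - x : ↥S) : G) ∈ T i
      push_cast
      exact hsub
    · rintro ⟨u, hu, rfl⟩
      show -(b i) + (a + ↑(x + u)) ∈ T i
      push_cast
      have : -(b i) + (a + ((x:G) + u)) = (-(b i) + (a + ↑x)) + ↑u := by abel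
      rw [this]
      exact add_mem hc hu
  have hUint : (interior (U : Set ↥S)).Nonempty := by
    rw [hFU] at hx
    have : (fun s : ↥S => x + s) '' (U : Set ↥S) =
        (Homeomorph.addLeft x) '' (U : Set ↥S) := rfl
    rw [this, ← Homeomorph.image_interior] at hx
    obtain ⟨u, hu, _⟩ := hx
    exact ⟨u, hu⟩
  obtain ⟨u, hu⟩ := hUint
  have hUopen : IsOpen (U : Set ↥S) :=
    AddSubgroup.isOpen_of_mem_nhds U (mem_interior_iff_mem_nhds.mp hu)
  -- cosets of U cover the compact group S, hence the quotient is finite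
  have hcover : (Set.univ : Set ↥S) ⊆ ⋃ g : ↥S, (g +ᵥ (U : Set ↥S)) := by
    intro s _
    refine Set.mem_iUnion.mpr ⟨s, ?_⟩
    rw [Set.mem_vadd_set_iff_neg_vadd_mem, vadd_eq_add, neg_add_cancel]
    exact U.zero_mem
  have hopen : ∀ g : ↥S, IsOpen (g +ᵥ (U : Set ↥S)) := by
    intro g
    have : g +ᵥ (U : Set ↥S) = (fun y : ↥S => -g + y) ⁻¹' (U : Set ↥S) := by
      ext y
      rw [Set.mem_vadd_set_iff_neg_vadd_mem, vadd_eq_add]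
      rfl
    rw [this]
    exact hUopen.preimage (continuous_const.add continuous_id)
  obtain ⟨fs, hfs⟩ := isCompact_univ.elim_finite_subcover _ hopen hcover
  haveI : Finite (↥S ⧸ U) := by
    refine Finite.of_surjective (fun g : fs => ((g : ↥S) : ↥S ⧸ U)) ?_
    intro q
    obtain ⟨s, rfl⟩ := QuotientAddGroup.mk_surjective q
    obtain ⟨g, hgmem⟩ := Set.mem_iUnion.mp (hfs (Set.mem_univ s))
    simp only [Set.mem_iUnion, exists_prop] at hgmem
    obtain ⟨hgfs, hsg⟩ := hgmem
    rw [Set.mem_vadd_set_iff_neg_vadd_mem, vadd_eq_add] at hsg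
    refine ⟨⟨g, hgfs⟩, ?_⟩
    exact (QuotientAddGroup.eq (s := U)).mpr hsg
  -- the quotient is divisible and finite, hence trivial
  have htrivial : ∀ q : ↥S ⧸ U, q = 0 := by
    intro q
    have hn : 0 < Nat.card (↥S ⧸ U) := Nat.card_pos
    obtain ⟨s, rfl⟩ := QuotientAddGroup.mk_surjective q
    obtain ⟨y, hy, hny⟩ := hSdiv ↑s s.2 (Nat.card (↥S ⧸ U)) hn
    have hys : (Nat.card (↥S ⧸ U)) • (⟨y, hy⟩ : ↥S) = s := by
      ext
      push_cast
      exact hny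
    calc ((s : ↥S) : ↥S ⧸ U) = ((Nat.card (↥S ⧸ U) • (⟨y, hy⟩ : ↥S) : ↥S) : ↥S ⧸ U) := by
          rw [hys]
      _ = Nat.card (↥S ⧸ U) • ((⟨y, hy⟩ : ↥S) : ↥S ⧸ U) := by
          exact map_nsmul (QuotientAddGroup.mk' U) _ _
      _ = 0 := card_nsmul_eq_zero'
  have hST : S ≤ T i := by
    intro z hz
    have : ((⟨z, hz⟩ : ↥S) : ↥S ⧸ U) = 0 := htrivial _
    have := (QuotientAddGroup.eq_zero_iff _).mp this
    exact this
  refine ⟨i, ?_⟩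
  intro y hy
  rw [Set.mem_vadd_set_iff_neg_vadd_mem, vadd_eq_add] at hy ⊢
  have h1 : (-a + y) - ↑x ∈ T i := hST (sub_mem hy x.2)
  have : -(b i) + y = (-(b i) + (a + ↑x)) + ((-a + y) - ↑x) := by abel
  rw [this]
  exact add_mem hc h1


-- Glue

-- Glue: pieces (cosets of closed divisible subgroups)

def IsPiece {G : Type*} [AddCommGroup G] [TopologicalSpace G] (C : Set G) : Prop :=
  ∃ (a : G) (S : AddSubgroup G), IsClosed (S : Set G) ∧ DivSG S ∧ C = a +ᵥ (S : Set G)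

abbrev Piece (G : Type*) [AddCommGroup G] [TopologicalSpace G] := {C : Set G // IsPiece C}

section StabSec
variable {G : Type*} [AddCommGroup G]

def stab (C : Set G) : AddSubgroup G where
  carrier := {g | g +ᵥ C = C}
  zero_mem' := zero_vadd _ _
  add_mem' := by
    intro g h hg hh
    show (g + h) +ᵥ C = C
    rw [← vadd_vadd]
    show g +ᵥ (h +ᵥ C) = C
    rw [hh, hg]
  neg_mem' := by
    intro g hg
    show (-g) +ᵥ C = C
    conv_lhs => rw [← hg]
    rw [vadd_vadd, neg_add_cancel, zero_vadd]

lemma mem_stab {C : Set G} {g : G} : g ∈ stab C ↔ g +ᵥ C = C := Iff.rfl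

lemma vadd_set_cancel (a : G) {X Y : Set G} (h : a +ᵥ X = a +ᵥ Y) : X = Y := by
  have := congrArg (fun Z => (-a) +ᵥ Z) h
  simpa [vadd_vadd] using this

lemma vadd_coe_of_mem (S : AddSubgroup G) {g : G} (hg : g ∈ S) : g +ᵥ (S : Set G) = S := by
  ext x
  rw [Set.mem_vadd_set_iff_neg_vadd_mem, vadd_eq_add]
  constructor
  · intro h
    have := add_mem hg h
    rwa [← add_assoc, add_neg_cancel, zero_add] at this
  · intro h
    exact add_mem (neg_mem hg) h

lemma stab_piece (a : G) (S : AddSubgroup G) : stab (a +ᵥ (S : Set G)) = S := by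
  ext g
  rw [mem_stab]
  have hcomm : g +ᵥ (a +ᵥ (S : Set G)) = a +ᵥ (g +ᵥ (S : Set G)) := by
    rw [vadd_vadd, vadd_vadd, add_comm]
  constructor
  · intro h
    rw [hcomm] at h
    have h2 : g +ᵥ (S : Set G) = (S : Set G) := vadd_set_cancel a h
    have : g ∈ g +ᵥ (S : Set G) := by
      rw [Set.mem_vadd_set_iff_neg_vadd_mem, vadd_eq_add, neg_add_cancel]
      exact S.zero_mem
    rwa [h2] at this
  · intro h
    rw [hcomm, vadd_coe_of_mem S h]

lemma piece_subset_le {a b : G} {S T : AddSubgroup G}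
    (h : a +ᵥ (S : Set G) ⊆ b +ᵥ (T : Set G)) : S ≤ T := by
  intro g hg
  have h0 : a ∈ a +ᵥ (S : Set G) := by
    rw [Set.mem_vadd_set_iff_neg_vadd_mem, vadd_eq_add, neg_add_cancel]; exact S.zero_mem
  have h1 : a + g ∈ a +ᵥ (S : Set G) := by
    rw [Set.mem_vadd_set_iff_neg_vadd_mem, vadd_eq_add, ← add_assoc, neg_add_cancel, zero_add]
    exact hg
  have hb0 : -b + a ∈ T := by
    have := h h0; rwa [Set.mem_vadd_set_iff_neg_vadd_mem, vadd_eq_add] at this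
  have hb1 : -b + (a + g) ∈ T := by
    have := h h1; rwa [Set.mem_vadd_set_iff_neg_vadd_mem, vadd_eq_add] at this
  have := sub_mem hb1 hb0
  have heq : (-b + (a + g)) - (-b + a) = g := by abel
  rwa [heq] at this

lemma piece_eq_of_mem {a b : G} {S : AddSubgroup G} (hab : a ∈ b +ᵥ (S : Set G)) :
    a +ᵥ (S : Set G) = b +ᵥ (S : Set G) := by
  rw [Set.mem_vadd_set_iff_neg_vadd_mem, vadd_eq_add] at hab
  ext x
  rw [Set.mem_vadd_set_iff_neg_vadd_mem, Set.mem_vadd_set_iff_neg_vadd_mem,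
    vadd_eq_add, vadd_eq_add]
  constructor
  · intro h
    have := add_mem hab h
    have heq : (-b + a) + (-a + x) = -b + x := by abel
    rwa [heq] at this
  · intro h
    have := add_mem (neg_mem hab) h
    have heq : -(-b + a) + (-b + x) = -a + x := by abel
    rwa [heq] at this

end StabSec

lemma piece_wf (d : ℕ) :
    WellFounded ((· < ·) : Piece (Gd d) → Piece (Gd d) → Prop) := by
  set Φ : Piece (Gd d) → ClosedSG (Gd d) := fun C =>
    ⟨stab C.1, by
      obtain ⟨a, S, hcl, hdiv, hC⟩ := C.2
      rw [hC, stab_piece]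
      exact hcl⟩ with hΦ
  refine Subrelation.wf (r := InvImage (· < ·) Φ) ?_ (InvImage.wf Φ (closedSG_wf d))
  intro C D hCD
  obtain ⟨a, S, hScl, hSdiv, hCeq⟩ := C.2
  obtain ⟨b, T, hTcl, hTdiv, hDeq⟩ := D.2
  have hsub : C.1 ⊆ D.1 := le_of_lt hCD
  have hST : S ≤ T := piece_subset_le (hCeq ▸ hDeq ▸ hsub)
  have hne : S ≠ T := by
    intro hEq
    subst hEq
    have ha : a ∈ D.1 := by
      refine hsub ?_
      rw [hCeq, Set.mem_vadd_set_iff_neg_vadd_mem, vadd_eq_add, neg_add_cancel]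
      exact S.zero_mem
    rw [hDeq] at ha
    have : C.1 = D.1 := by rw [hCeq, hDeq, piece_eq_of_mem ha]
    exact (ne_of_lt hCD) (Subtype.ext this)
  show Φ C < Φ D
  have h1 : (Φ C).1 = S := by rw [hΦ]; show stab C.1 = S; rw [hCeq, stab_piece]
  have h2 : (Φ D).1 = T := by rw [hΦ]; show stab D.1 = T; rw [hDeq, stab_piece]
  rw [← Subtype.coe_lt_coe, h1, h2]
  exact lt_of_le_of_ne hST hne

lemma finset_exists_max {α : Type*} [PartialOrder α] [DecidableEq α] (F : Finset α) {C : α}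
    (hC : C ∈ F) : ∃ D ∈ F, C ≤ D ∧ ∀ E ∈ F, ¬ D < E := by
  classical
  set M := F.filter (fun x => C ≤ x) with hM
  have hMne : M.Nonempty := ⟨C, Finset.mem_filter.mpr ⟨hC, le_rfl⟩⟩
  obtain ⟨m, hm', hmax'⟩ := Finset.exists_maximal hMne
  have hm : m ∈ M := hm'
  have hmax : ∀ E ∈ M, ¬ m < E := fun E hE hlt =>
    lt_irrefl m (lt_of_lt_of_le hlt (hmax' hE hlt.le))
  rw [hM, Finset.mem_filter] at hm
  refine ⟨m, hm.1, hm.2, fun E hE hlt => ?_⟩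
  exact hmax E (Finset.mem_filter.mpr ⟨hE, le_trans hm.2 (le_of_lt hlt)⟩) hlt



lemma finset_val_decomp {α : Type*} [DecidableEq α] (s t : Finset α) :
    s.val = (s ∩ t).val + (s \ t).val := by
  have hdisj : Disjoint (s ∩ t) (s \ t) :=
    Finset.disjoint_left.mpr fun x hx hx2 => (Finset.mem_sdiff.mp hx2).2 (Finset.mem_inter.mp hx).2
  have hEq : (s ∩ t).disjUnion (s \ t) hdisj = s := by
    ext x
    simp only [Finset.mem_disjUnion, Finset.mem_inter, Finset.mem_sdiff]
    tauto
  calc s.val = ((s ∩ t).disjUnion (s \ t) hdisj).val := by rw [hEq]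
    _ = (s ∩ t).val + (s \ t).val := rfl

theorem main (d : ℕ) :
    ¬ ∃ X : ℕ → Set (Gd d),
      (∀ n, ∃ s : Finset (AddSubgroup (Gd d)),
        (∀ H ∈ s, IsClosed (H : Set (Gd d))) ∧
        X n = ⋃ H ∈ s, (H : Set (Gd d))) ∧
      ∀ n, X (n + 1) ⊂ X n := by
  rintro ⟨X, hX, hchain⟩
  classical
  -- Step 1: each `X n` is a finite union of pieces
  have hpieces : ∀ n, ∃ Fs : Finset (Piece (Gd d)), X n = ⋃ C ∈ Fs, (C.1 : Set (Gd d)) := by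
    intro n
    obtain ⟨s, hscl, hXeq⟩ := hX n
    have hdec := fun H : {H // H ∈ s} => decompose d H.1 (hscl H.1 H.2)
    choose td htd1 htd2 using hdec
    refine ⟨s.attach.biUnion (fun H => (td H).attach.image (fun p =>
      ⟨p.1.1 +ᵥ ((p.1.2 : AddSubgroup (Gd d)) : Set (Gd d)),
        p.1.1, p.1.2, (htd1 H p.1 p.2).1, (htd1 H p.1 p.2).2.1, rfl⟩)), ?_⟩
    rw [hXeq]
    ext x
    simp only [Set.mem_iUnion, exists_prop]
    constructor
    · rintro ⟨H, hHs, hxH⟩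
      have hx2 : x ∈ (H : Set (Gd d)) := hxH
      rw [htd2 ⟨H, hHs⟩] at hx2
      simp only [Set.mem_iUnion, exists_prop] at hx2
      obtain ⟨p, hp, hxp⟩ := hx2
      exact ⟨_, Finset.mem_biUnion.mpr ⟨⟨H, hHs⟩, Finset.mem_attach _ _,
        Finset.mem_image.mpr ⟨⟨p, hp⟩, Finset.mem_attach _ _, rfl⟩⟩, hxp⟩
    · rintro ⟨C, hC, hxC⟩
      obtain ⟨H, _, hCim⟩ := Finset.mem_biUnion.mp hC
      obtain ⟨p, _, rfl⟩ := Finset.mem_image.mp hCim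
      refine ⟨H.1, H.2, ?_⟩
      have hsub : (p.1.1 +ᵥ ((p.1.2 : AddSubgroup (Gd d)) : Set (Gd d))) ⊆ (H.1 : Set (Gd d)) := by
        rw [htd2 H]
        intro z hz
        exact Set.mem_iUnion₂.mpr ⟨p.1, p.2, hz⟩
      exact hsub hxC
  choose Fn hFn using hpieces
  -- Step 2: maximal antichains
  set A : ℕ → Finset (Piece (Gd d)) := fun n => (Fn n).filter (fun C => ∀ D ∈ Fn n, ¬ C < D)
    with hA
  have hAanti : ∀ n, ∀ C ∈ A n, ∀ D ∈ A n, ¬ C < D := by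
    intro n C hC D hD
    exact (Finset.mem_filter.mp hC).2 D (Finset.mem_filter.mp hD).1
  have hAmax : ∀ n, ∀ C ∈ Fn n, ∃ D ∈ A n, C ≤ D := by
    intro n C hC
    obtain ⟨D, hD, hCD, hmax⟩ := finset_exists_max (Fn n) hC
    exact ⟨D, Finset.mem_filter.mpr ⟨hD, hmax⟩, hCD⟩
  have hAunion : ∀ n, X n = ⋃ C ∈ A n, (C.1 : Set (Gd d)) := by
    intro n
    rw [hFn n]
    apply Set.Subset.antisymm
    · intro x hx
      simp only [Set.mem_iUnion, exists_prop] at hx ⊢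
      obtain ⟨C, hC, hxC⟩ := hx
      obtain ⟨D, hD, hCD⟩ := hAmax n C hC
      exact ⟨D, hD, hCD hxC⟩
    · intro x hx
      simp only [Set.mem_iUnion, exists_prop] at hx ⊢
      obtain ⟨C, hC, hxC⟩ := hx
      exact ⟨C, (Finset.mem_filter.mp hC).1, hxC⟩
  -- Step 3: piece representations and the covering property
  have hrep := fun C : Piece (Gd d) => C.2
  choose pa pS pScl pSdiv pEq using hrep
  have hcover : ∀ n, ∀ C ∈ A (n+1), ∃ D ∈ A n, C ≤ D := by
    intro n C hC
    have hCX : (C.1 : Set (Gd d)) ⊆ X (n+1) := by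
      rw [hAunion (n+1)]
      intro z hz
      exact Set.mem_iUnion₂.mpr ⟨C, hC, hz⟩
    have hCXn : (C.1 : Set (Gd d)) ⊆ X n := hCX.trans (hchain n).subset
    have hcov2 : (pa C +ᵥ ((pS C : AddSubgroup (Gd d)) : Set (Gd d))) ⊆
        ⋃ i : {D // D ∈ A n}, (pa i.1 +ᵥ ((pS i.1 : AddSubgroup (Gd d)) : Set (Gd d))) := by
      rw [← pEq C]
      intro x hx
      have hx2 := hCXn hx
      rw [hAunion n] at hx2
      simp only [Set.mem_iUnion, exists_prop] at hx2
      obtain ⟨D, hD, hxD⟩ := hx2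
      rw [pEq D] at hxD
      exact Set.mem_iUnion.mpr ⟨⟨D, hD⟩, hxD⟩
    obtain ⟨i, hi⟩ :=
      prime_coset (pa C) (pS C) (pScl C) (pSdiv C) (ι := {D // D ∈ A n})
        (fun i => pa i.1) (fun i => pS i.1) (fun i => pScl i.1) hcov2
    refine ⟨i.1, i.2, ?_⟩
    show (C.1 : Set (Gd d)) ⊆ i.1.1
    rw [pEq C, pEq i.1]
    exact hi
  -- Step 4: strictness
  have hstrict : ∀ n, ∃ D ∈ A n, ∀ C ∈ A (n+1), ¬ (D ≤ C) := by
    intro n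
    by_contra hcon
    push_neg at hcon
    have : X n ⊆ X (n+1) := by
      rw [hAunion n, hAunion (n+1)]
      intro x hx
      simp only [Set.mem_iUnion, exists_prop] at hx ⊢
      obtain ⟨D, hD, hxD⟩ := hx
      obtain ⟨C, hC, hDC⟩ := hcon D hD
      exact ⟨C, hC, hDC hxD⟩
    exact (hchain n).not_subset this
  -- Step 5: the multiset chain and the contradiction
  set M : ℕ → Multiset (Piece (Gd d)) := fun n => (A n).val with hMdef
  have hstep : ∀ n, Relation.TransGen (OneStep (β := Piece (Gd d))) (M (n+1)) (M n) := by
    intro n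
    set Cm : Multiset (Piece (Gd d)) := (A n ∩ A (n+1)).val with hCm
    set Xm : Multiset (Piece (Gd d)) := (A n \ A (n+1)).val with hXm
    set Ym : Multiset (Piece (Gd d)) := (A (n+1) \ A n).val with hYm
    have hMn : M n = Cm + Xm := finset_val_decomp (A n) (A (n+1))
    have hMn1 : M (n+1) = Cm + Ym := by
      have := finset_val_decomp (A (n+1)) (A n)
      rwa [Finset.inter_comm] at this
    have hXne : Xm ≠ 0 := by
      obtain ⟨D, hD, hDnot⟩ := hstrict n
      have hDnotin : D ∉ A (n+1) := fun h => hDnot D h le_rfl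
      intro h0
      have : D ∈ Xm := Finset.mem_sdiff.mpr ⟨hD, hDnotin⟩
      rw [h0] at this
      exact Multiset.notMem_zero D this
    have hY : ∀ y ∈ Ym, ∃ x ∈ Xm, y < x := by
      intro y hy
      have hy2 : y ∈ A (n+1) ∧ y ∉ A n := Finset.mem_sdiff.mp hy
      obtain ⟨D, hD, hyD⟩ := hcover n y hy2.1
      have hne : y ≠ D := fun h => hy2.2 (h ▸ hD)
      have hlt : y < D := lt_of_le_of_ne hyD hne
      have hDnot : D ∉ A (n+1) := fun h => hAanti (n+1) y hy2.1 D h hlt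
      exact ⟨D, Finset.mem_sdiff.mpr ⟨hD, hDnot⟩, hlt⟩
    rw [hMn, hMn1]
    exact transGen_oneStep Xm hXne Cm Ym hY
  exact no_descending ((oneStep_wf (piece_wf d)).transGen) M hstep

end
end ToricMLD

/-- Lawrence: in the real torus `T = ℝ^d/ℤ^d` (modelled as
`Fin d → ℝ/ℤ`, i.e. `Fin d → AddCircle 1`), the collection of subsets which are
finite unions of closed subgroups satisfies the descending chain condition:
there is no strictly decreasing sequence `X₁ ⊋ X₂ ⊋ ⋯` of such subsets. -/
theorem toric_mld_stmt5 (d : ℕ) :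
    ¬ ∃ X : ℕ → Set (Fin d → AddCircle (1:ℝ)),
      (∀ n, ∃ s : Finset (AddSubgroup (Fin d → AddCircle (1:ℝ))),
        (∀ H ∈ s, IsClosed (H : Set (Fin d → AddCircle (1:ℝ)))) ∧
        X n = ⋃ H ∈ s, (H : Set (Fin d → AddCircle (1:ℝ)))) ∧
      ∀ n, X (n + 1) ⊂ X n := by
  exact ToricMLD.main d
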